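/- arXiv:2506.04411 — 4 statements merged into one kernel-verified Lean document; each statement's English description precedes it below -/
import Mathlib

section
/- Let S = {(x_i, y_i)}_{i=1}^N be a dataset with C classes each containing at most n_max samples, let f map samples to nonzero vectors in ℝ^d, and define the decoupled contrastive loss L^DCL(f) and the negatives-only supervised contrastive loss L^NSCL(f) (the latter replaces the denominator sum over j ≠ i by the sum over j with y_j ≠ y_i). Then L^NSCL(f) ≤ L^DCL(f) ≤ L^NSCL(f) + log(1 + n_max·e²/(N − n_max)) ≤ L^NSCL(f) + n_max·e²/(N − n_max). -/
open Finset in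
theorem dcl_nscl_duality (d K N n_max C : ℕ) (hK : 0 < K) (hN : 0 < N)
    (hn : 0 < n_max) (hnN : n_max < N)
    (z : Fin N → Fin K → EuclideanSpace ℝ (Fin d))
    (hz : ∀ i l, z i l ≠ 0)
    (y : Fin N → Fin C)
    (hclass : ∀ c : Fin C, (univ.filter (fun i => y i = c)).card ≤ n_max)
    (sim : EuclideanSpace ℝ (Fin d) → EuclideanSpace ℝ (Fin d) → ℝ)
    (hsim : ∀ u v, sim u v = (inner ℝ u v : ℝ) / (‖u‖ * ‖v‖))
    (LDCL LNSCL : ℝ)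
    (hDCL : LDCL = -(1 / ((K : ℝ) ^ 2 * N)) * ∑ l₁ : Fin K, ∑ l₂ : Fin K, ∑ i : Fin N,
      Real.log (Real.exp (sim (z i l₁) (z i l₂)) /
        (∑ l₃ : Fin K, ∑ j ∈ univ.filter (fun j => j ≠ i),
          Real.exp (sim (z i l₁) (z j l₃)))))
    (hNSCL : LNSCL = -(1 / ((K : ℝ) ^ 2 * N)) * ∑ l₁ : Fin K, ∑ l₂ : Fin K, ∑ i : Fin N,
      Real.log (Real.exp (sim (z i l₁) (z i l₂)) /
        (∑ l₃ : Fin K, ∑ j ∈ univ.filter (fun j => y j ≠ y i),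
          Real.exp (sim (z i l₁) (z j l₃))))) :
    LNSCL ≤ LDCL ∧
      LDCL ≤ LNSCL + Real.log (1 + n_max * (Real.exp 1) ^ 2 / ((N : ℝ) - n_max)) ∧
      LNSCL + Real.log (1 + n_max * (Real.exp 1) ^ 2 / ((N : ℝ) - n_max)) ≤
        LNSCL + n_max * (Real.exp 1) ^ 2 / ((N : ℝ) - n_max) := by
  have hKR : (0:ℝ) < K := by exact_mod_cast hK
  have hNR : (0:ℝ) < N := by exact_mod_cast hN
  have hNn : (0:ℝ) < (N:ℝ) - n_max := by
    have : (n_max:ℝ) < N := by exact_mod_cast hnN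
    linarith
  set r : ℝ := n_max * (Real.exp 1) ^ 2 / ((N : ℝ) - n_max) with hrdef
  have hr0 : 0 ≤ r := by positivity
  -- sim is bounded by 1 in absolute value
  have hsim1 : ∀ u v, |sim u v| ≤ 1 := by
    intro u v; rw [hsim]
    exact abs_real_inner_div_norm_mul_norm_le_one u v
  have hexp_le : ∀ u v, Real.exp (sim u v) ≤ Real.exp 1 :=
    fun u v => Real.exp_le_exp.mpr (abs_le.mp (hsim1 u v)).2
  have hexp_ge : ∀ u v, Real.exp (-1) ≤ Real.exp (sim u v) :=
    fun u v => Real.exp_le_exp.mpr (abs_le.mp (hsim1 u v)).1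
  have hKne : Nonempty (Fin K) := ⟨⟨0, hK⟩⟩
  set A : Fin N → Fin K → ℝ := fun i l₁ => ∑ l₃ : Fin K, ∑ j ∈ univ.filter (fun j => j ≠ i),
      Real.exp (sim (z i l₁) (z j l₃)) with hAdef
  set B : Fin N → Fin K → ℝ := fun i l₁ => ∑ l₃ : Fin K, ∑ j ∈ univ.filter (fun j => y j ≠ y i),
      Real.exp (sim (z i l₁) (z j l₃)) with hBdef
  -- B is positive
  have hBpos : ∀ i l₁, 0 < B i l₁ := by
    intro i l₁
    have hne : (univ.filter (fun j => y j ≠ y i)).Nonempty := by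
      by_contra h
      rw [Finset.not_nonempty_iff_eq_empty, Finset.filter_eq_empty_iff] at h
      have heq : (univ.filter (fun j => y j = y i)) = (univ : Finset (Fin N)) := by
        refine Finset.filter_true_of_mem fun j _ => ?_
        by_contra hj
        exact h (Finset.mem_univ j) hj
      have h2 := hclass (y i)
      rw [heq, Finset.card_univ, Fintype.card_fin] at h2
      omega
    refine Finset.sum_pos (fun l₃ _ => Finset.sum_pos (fun j _ => Real.exp_pos _) hne)
      Finset.univ_nonempty
  -- B ≤ A
  have hBA : ∀ i l₁, B i l₁ ≤ A i l₁ := by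
    intro i l₁
    refine Finset.sum_le_sum fun l₃ _ => Finset.sum_le_sum_of_subset_of_nonneg ?_
      (fun j _ _ => (Real.exp_pos _).le)
    intro j hj
    simp only [Finset.mem_filter, Finset.mem_univ, true_and] at hj ⊢
    rintro rfl; exact hj rfl
  have hApos : ∀ i l₁, 0 < A i l₁ := fun i l₁ => lt_of_lt_of_le (hBpos i l₁) (hBA i l₁)
  -- A ≤ B + K * n_max * e
  have hAB : ∀ i l₁, A i l₁ ≤ B i l₁ + K * n_max * Real.exp 1 := by
    intro i l₁
    have hsplit : ∀ l₃ : Fin K,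
        ∑ j ∈ univ.filter (fun j => j ≠ i), Real.exp (sim (z i l₁) (z j l₃))
          ≤ (∑ j ∈ univ.filter (fun j => y j ≠ y i), Real.exp (sim (z i l₁) (z j l₃)))
            + n_max * Real.exp 1 := by
      intro l₃
      have hT : univ.filter (fun j => j ≠ i)
          = univ.filter (fun j => y j ≠ y i) ∪ univ.filter (fun j => j ≠ i ∧ y j = y i) := by
        ext j
        simp only [Finset.mem_filter, Finset.mem_union, Finset.mem_univ, true_and]
        constructor
        · intro hji
          by_cases h : y j = y i
          · exact Or.inr ⟨hji, h⟩
          · exact Or.inl h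
        · rintro (h | ⟨h, _⟩)
          · rintro rfl; exact h rfl
          · exact h
      have hdisj : Disjoint (univ.filter (fun j => y j ≠ y i))
          (univ.filter (fun j => j ≠ i ∧ y j = y i)) := by
        simp only [Finset.disjoint_left, Finset.mem_filter, Finset.mem_univ, true_and]
        rintro j h1 ⟨_, h2⟩
        exact h1 h2
      rw [hT, Finset.sum_union hdisj]
      have hcard : (univ.filter (fun j => j ≠ i ∧ y j = y i)).card ≤ n_max := by
        refine le_trans (Finset.card_le_card ?_) (hclass (y i))
        intro j hj
        simp only [Finset.mem_filter, Finset.mem_univ, true_and] at hj ⊢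
        exact hj.2
      have h1 := Finset.sum_le_card_nsmul (univ.filter (fun j => j ≠ i ∧ y j = y i))
        (fun j => Real.exp (sim (z i l₁) (z j l₃))) (Real.exp 1) (fun j _ => hexp_le _ _)
      have h2 : ((univ.filter (fun j => j ≠ i ∧ y j = y i)).card : ℝ) * Real.exp 1
          ≤ (n_max : ℝ) * Real.exp 1 := by
        have : ((univ.filter (fun j => j ≠ i ∧ y j = y i)).card : ℝ) ≤ (n_max : ℝ) := by
          exact_mod_cast hcard
        exact mul_le_mul_of_nonneg_right this (Real.exp_pos 1).le
      rw [nsmul_eq_mul] at h1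
      linarith
    calc A i l₁ ≤ ∑ l₃ : Fin K,
        ((∑ j ∈ univ.filter (fun j => y j ≠ y i), Real.exp (sim (z i l₁) (z j l₃)))
          + n_max * Real.exp 1) := Finset.sum_le_sum fun l₃ _ => hsplit l₃
      _ = B i l₁ + K * n_max * Real.exp 1 := by
          rw [Finset.sum_add_distrib, Finset.sum_const, Finset.card_univ, Fintype.card_fin,
            nsmul_eq_mul]
          ring
  -- B ≥ K * (N - n_max) * e⁻¹
  have hBr : ∀ i l₁, (K:ℝ) * (((N:ℝ) - n_max) * Real.exp (-1)) ≤ B i l₁ := by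
    intro i l₁
    have hcard2 : ((N:ℝ) - n_max) ≤ ((univ.filter (fun j => y j ≠ y i)).card : ℝ) := by
      have h1 := Finset.card_filter_add_card_filter_not
        (s := (univ : Finset (Fin N))) (p := fun j => y j = y i)
      rw [Finset.card_univ, Fintype.card_fin] at h1
      have h2 := hclass (y i)
      have h3 : N - n_max ≤ (univ.filter (fun j => ¬ y j = y i)).card := by omega
      have h4 : (univ.filter (fun j => ¬ y j = y i)) = (univ.filter (fun j => y j ≠ y i)) := by
        simp only [ne_eq]
      rw [h4] at h3
      have h5 : ((N - n_max : ℕ) : ℝ) ≤ ((univ.filter (fun j => y j ≠ y i)).card : ℝ) := by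
        exact_mod_cast h3
      have h6 : ((N - n_max : ℕ) : ℝ) = (N:ℝ) - n_max := by
        have := hnN.le
        push_cast [this]
        ring
      linarith
    have hb1 : ∀ l₃ : Fin K, ((N:ℝ) - n_max) * Real.exp (-1)
        ≤ ∑ j ∈ univ.filter (fun j => y j ≠ y i), Real.exp (sim (z i l₁) (z j l₃)) := by
      intro l₃
      have h1 := Finset.card_nsmul_le_sum (univ.filter (fun j => y j ≠ y i))
        (fun j => Real.exp (sim (z i l₁) (z j l₃))) (Real.exp (-1)) (fun j _ => hexp_ge _ _)
      rw [nsmul_eq_mul] at h1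
      have h2 : ((N:ℝ) - n_max) * Real.exp (-1)
          ≤ ((univ.filter (fun j => y j ≠ y i)).card : ℝ) * Real.exp (-1) :=
        mul_le_mul_of_nonneg_right hcard2 (Real.exp_pos _).le
      linarith
    have h1 := Finset.card_nsmul_le_sum (univ : Finset (Fin K))
      (fun l₃ => ∑ j ∈ univ.filter (fun j => y j ≠ y i), Real.exp (sim (z i l₁) (z j l₃)))
      (((N:ℝ) - n_max) * Real.exp (-1)) (fun l₃ _ => hb1 l₃)
    rw [nsmul_eq_mul, Finset.card_univ, Fintype.card_fin] at h1
    exact h1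
  -- key: K * n_max * e ≤ B * r
  have hkey : ∀ i l₁, (K:ℝ) * n_max * Real.exp 1 ≤ B i l₁ * r := by
    intro i l₁
    have h1 := mul_le_mul_of_nonneg_right (hBr i l₁) hr0
    have h2 : (K:ℝ) * (((N:ℝ) - n_max) * Real.exp (-1)) * r = K * n_max * Real.exp 1 := by
      rw [hrdef, Real.exp_neg]
      have he : Real.exp 1 ≠ 0 := (Real.exp_pos 1).ne'
      field_simp
    linarith [h2 ▸ h1]
  -- log A ≤ log B + log (1 + r)
  have hlog : ∀ i l₁, Real.log (A i l₁) ≤ Real.log (B i l₁) + Real.log (1 + r) := by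
    intro i l₁
    have hABr : A i l₁ ≤ B i l₁ * (1 + r) := by
      have := hkey i l₁
      have := hAB i l₁
      nlinarith [hBpos i l₁]
    calc Real.log (A i l₁) ≤ Real.log (B i l₁ * (1 + r)) :=
          Real.log_le_log (hApos i l₁) hABr
      _ = Real.log (B i l₁) + Real.log (1 + r) :=
          Real.log_mul (hBpos i l₁).ne' (by positivity)
  -- rewrite the losses
  have hDCL' : LDCL = -(1 / ((K : ℝ) ^ 2 * N)) * ∑ l₁ : Fin K, ∑ l₂ : Fin K, ∑ i : Fin N,
      (sim (z i l₁) (z i l₂) - Real.log (A i l₁)) := by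
    rw [hDCL]
    congr 1
    refine Finset.sum_congr rfl fun l₁ _ => Finset.sum_congr rfl fun l₂ _ =>
      Finset.sum_congr rfl fun i _ => ?_
    rw [show (∑ l₃ : Fin K, ∑ j ∈ univ.filter (fun j => j ≠ i),
      Real.exp (sim (z i l₁) (z j l₃))) = A i l₁ from rfl]
    rw [Real.log_div (Real.exp_ne_zero _) (hApos i l₁).ne', Real.log_exp]
  have hNSCL' : LNSCL = -(1 / ((K : ℝ) ^ 2 * N)) * ∑ l₁ : Fin K, ∑ l₂ : Fin K, ∑ i : Fin N,
      (sim (z i l₁) (z i l₂) - Real.log (B i l₁)) := by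
    rw [hNSCL]
    congr 1
    refine Finset.sum_congr rfl fun l₁ _ => Finset.sum_congr rfl fun l₂ _ =>
      Finset.sum_congr rfl fun i _ => ?_
    rw [show (∑ l₃ : Fin K, ∑ j ∈ univ.filter (fun j => y j ≠ y i),
      Real.exp (sim (z i l₁) (z j l₃))) = B i l₁ from rfl]
    rw [Real.log_div (Real.exp_ne_zero _) (hBpos i l₁).ne', Real.log_exp]
  set SA : ℝ := ∑ l₁ : Fin K, ∑ l₂ : Fin K, ∑ i : Fin N,
      (sim (z i l₁) (z i l₂) - Real.log (A i l₁)) with hSAdef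
  set SB : ℝ := ∑ l₁ : Fin K, ∑ l₂ : Fin K, ∑ i : Fin N,
      (sim (z i l₁) (z i l₂) - Real.log (B i l₁)) with hSBdef
  have hc : (0:ℝ) < 1 / ((K : ℝ) ^ 2 * N) := by positivity
  have hcK : (1 / ((K : ℝ) ^ 2 * N)) * ((K : ℝ) ^ 2 * N) = 1 := by
    field_simp
  have hSASB : SA ≤ SB := by
    refine Finset.sum_le_sum fun l₁ _ => Finset.sum_le_sum fun l₂ _ =>
      Finset.sum_le_sum fun i _ => ?_
    have := Real.log_le_log (hBpos i l₁) (hBA i l₁)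
    linarith
  have hSBSA : SB - SA ≤ (K : ℝ) ^ 2 * N * Real.log (1 + r) := by
    have heq : SB - SA = ∑ l₁ : Fin K, ∑ l₂ : Fin K, ∑ i : Fin N,
        (Real.log (A i l₁) - Real.log (B i l₁)) := by
      rw [hSAdef, hSBdef, ← Finset.sum_sub_distrib]
      refine Finset.sum_congr rfl fun l₁ _ => ?_
      rw [← Finset.sum_sub_distrib]
      refine Finset.sum_congr rfl fun l₂ _ => ?_
      rw [← Finset.sum_sub_distrib]
      refine Finset.sum_congr rfl fun i _ => ?_
      ring
    rw [heq]
    calc ∑ l₁ : Fin K, ∑ l₂ : Fin K, ∑ i : Fin N,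
          (Real.log (A i l₁) - Real.log (B i l₁))
        ≤ ∑ _l₁ : Fin K, ∑ _l₂ : Fin K, ∑ _i : Fin N, Real.log (1 + r) := by
          refine Finset.sum_le_sum fun l₁ _ => Finset.sum_le_sum fun l₂ _ =>
            Finset.sum_le_sum fun i _ => ?_
          have := hlog i l₁
          linarith
      _ = (K : ℝ) ^ 2 * N * Real.log (1 + r) := by
          simp only [Finset.sum_const, Finset.card_univ, Fintype.card_fin, nsmul_eq_mul]
          push_cast
          ring
  refine ⟨?_, ?_, ?_⟩
  · rw [hDCL', hNSCL']
    have := mul_le_mul_of_nonneg_left hSASB hc.le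
    linarith
  · rw [hDCL', hNSCL']
    have h1 := mul_le_mul_of_nonneg_left hSBSA hc.le
    have h2 : (1 / ((K : ℝ) ^ 2 * N)) * ((K : ℝ) ^ 2 * N * Real.log (1 + r))
        = Real.log (1 + r) := by
      rw [← mul_assoc, hcK, one_mul]
    rw [h2] at h1
    rw [mul_sub] at h1
    linarith
  · have hlr : Real.log (1 + r) ≤ r := by
      have := Real.log_le_sub_one_of_pos (show (0:ℝ) < 1 + r by linarith)
      linarith
    linarith
end

section
/- The difference L^DCL(f) − L^NSCL(f) equals (1/N) ∑_{i=1}^N log(1 + Z_i^{pos∖self}/Z_i^{neg}), where Z_i^{pos∖self} = ∑_{l₃} ∑_{j ≠ i, y_j = y_i} exp(sim(z_i^{l₁}, z_j^{l₃})) and Z_i^{neg} = ∑_{l₃} ∑_{j : y_j ≠ y_i} exp(sim(z_i^{l₁}, z_j^{l₃})); in particular L^DCL(f) ≥ L^NSCL(f). -/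
open Finset in
theorem dcl_sub_nscl_eq (d K N C : ℕ) (hK : 0 < K) (hN : 0 < N)
    (z : Fin N → Fin K → EuclideanSpace ℝ (Fin d))
    (hz : ∀ i l, z i l ≠ 0)
    (y : Fin N → Fin C)
    (sim : EuclideanSpace ℝ (Fin d) → EuclideanSpace ℝ (Fin d) → ℝ)
    (hsim : ∀ u v, sim u v = (inner ℝ u v : ℝ) / (‖u‖ * ‖v‖))
    (LDCL LNSCL : ℝ)
    (hDCL : LDCL = -(1 / ((K : ℝ) ^ 2 * N)) * ∑ l₁ : Fin K, ∑ l₂ : Fin K, ∑ i : Fin N,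
      Real.log (Real.exp (sim (z i l₁) (z i l₂)) /
        (∑ l₃ : Fin K, ∑ j ∈ univ.filter (fun j => j ≠ i),
          Real.exp (sim (z i l₁) (z j l₃)))))
    (hNSCL : LNSCL = -(1 / ((K : ℝ) ^ 2 * N)) * ∑ l₁ : Fin K, ∑ l₂ : Fin K, ∑ i : Fin N,
      Real.log (Real.exp (sim (z i l₁) (z i l₂)) /
        (∑ l₃ : Fin K, ∑ j ∈ univ.filter (fun j => y j ≠ y i),
          Real.exp (sim (z i l₁) (z j l₃)))))
    (hneg : ∀ i : Fin N, ∃ j : Fin N, y j ≠ y i) :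
    LDCL - LNSCL = (1 / ((K : ℝ) * N)) * ∑ l₁ : Fin K, ∑ i : Fin N,
      Real.log (1 +
        (∑ l₃ : Fin K, ∑ j ∈ univ.filter (fun j => j ≠ i ∧ y j = y i),
          Real.exp (sim (z i l₁) (z j l₃))) /
        (∑ l₃ : Fin K, ∑ j ∈ univ.filter (fun j => y j ≠ y i),
          Real.exp (sim (z i l₁) (z j l₃)))) ∧
    LNSCL ≤ LDCL := by
  have hKR : (0:ℝ) < K := by exact_mod_cast hK
  have hNR : (0:ℝ) < N := by exact_mod_cast hN
  haveI : NeZero K := ⟨hK.ne'⟩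
  set A : Fin N → Fin K → ℝ := fun i l₁ =>
    ∑ l₃ : Fin K, ∑ j ∈ univ.filter (fun j => j ≠ i ∧ y j = y i),
      Real.exp (sim (z i l₁) (z j l₃)) with hAdef
  set B : Fin N → Fin K → ℝ := fun i l₁ =>
    ∑ l₃ : Fin K, ∑ j ∈ univ.filter (fun j => y j ≠ y i),
      Real.exp (sim (z i l₁) (z j l₃)) with hBdef
  have hBpos : ∀ i l₁, 0 < B i l₁ := by
    intro i l₁
    obtain ⟨j, hj⟩ := hneg i
    refine Finset.sum_pos (fun l₃ _ => Finset.sum_pos (fun j' _ => Real.exp_pos _)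
      ⟨j, mem_filter.2 ⟨mem_univ _, hj⟩⟩) univ_nonempty
  have hAnn : ∀ i l₁, 0 ≤ A i l₁ := by
    intro i l₁
    exact Finset.sum_nonneg fun l₃ _ => Finset.sum_nonneg fun j _ => (Real.exp_pos _).le
  have hABpos : ∀ i l₁, 0 < A i l₁ + B i l₁ := fun i l₁ =>
    add_pos_of_nonneg_of_pos (hAnn i l₁) (hBpos i l₁)
  have hD : ∀ i l₁, (∑ l₃ : Fin K, ∑ j ∈ univ.filter (fun j => j ≠ i),
      Real.exp (sim (z i l₁) (z j l₃))) = A i l₁ + B i l₁ := by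
    intro i l₁
    rw [hAdef, hBdef]
    rw [← Finset.sum_add_distrib]
    refine Finset.sum_congr rfl fun l₃ _ => ?_
    have hsplit : (univ.filter (fun j => j ≠ i ∧ y j = y i)) =
        (univ.filter (fun j => j ≠ i)).filter (fun j => y j = y i) := by
      rw [Finset.filter_filter]
    have hsplit2 : (univ.filter (fun j : Fin N => y j ≠ y i)) =
        (univ.filter (fun j => j ≠ i)).filter (fun j => ¬ y j = y i) := by
      rw [Finset.filter_filter]
      apply Finset.filter_congr
      intro j _
      constructor
      · intro h; exact ⟨fun hji => h (by rw [hji]), h⟩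
      · intro h; exact h.2
    rw [hsplit, hsplit2, Finset.sum_filter_add_sum_filter_not]
  have hterm : ∀ (i : Fin N) (l₁ l₂ : Fin K),
      Real.log (Real.exp (sim (z i l₁) (z i l₂)) / (A i l₁ + B i l₁)) -
      Real.log (Real.exp (sim (z i l₁) (z i l₂)) / B i l₁) =
      -(Real.log (1 + A i l₁ / B i l₁)) := by
    intro i l₁ l₂
    have h1 : 1 + A i l₁ / B i l₁ = (A i l₁ + B i l₁) / B i l₁ := by
      rw [add_div, div_self (hBpos i l₁).ne']
      ring
    rw [Real.log_div (Real.exp_ne_zero _) (hABpos i l₁).ne',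
      Real.log_div (Real.exp_ne_zero _) (hBpos i l₁).ne', h1,
      Real.log_div (hABpos i l₁).ne' (hBpos i l₁).ne']
    ring
  have key : LDCL - LNSCL = (1 / ((K : ℝ) * N)) * ∑ l₁ : Fin K, ∑ i : Fin N,
      Real.log (1 + A i l₁ / B i l₁) := by
    rw [hDCL, hNSCL]
    set T := ∑ l₁ : Fin K, ∑ i : Fin N, Real.log (1 + A i l₁ / B i l₁) with hT
    set S1 := ∑ l₁ : Fin K, ∑ l₂ : Fin K, ∑ i : Fin N,
      Real.log (Real.exp (sim (z i l₁) (z i l₂)) /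
        (∑ l₃ : Fin K, ∑ j ∈ univ.filter (fun j => j ≠ i),
          Real.exp (sim (z i l₁) (z j l₃)))) with hS1
    set S2 := ∑ l₁ : Fin K, ∑ l₂ : Fin K, ∑ i : Fin N,
      Real.log (Real.exp (sim (z i l₁) (z i l₂)) /
        (∑ l₃ : Fin K, ∑ j ∈ univ.filter (fun j => y j ≠ y i),
          Real.exp (sim (z i l₁) (z j l₃)))) with hS2
    have hS : S1 - S2 = ∑ l₁ : Fin K, ∑ l₂ : Fin K, ∑ i : Fin N,
        -(Real.log (1 + A i l₁ / B i l₁)) := by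
      rw [hS1, hS2, ← Finset.sum_sub_distrib]
      refine Finset.sum_congr rfl fun l₁ _ => ?_
      rw [← Finset.sum_sub_distrib]
      refine Finset.sum_congr rfl fun l₂ _ => ?_
      rw [← Finset.sum_sub_distrib]
      refine Finset.sum_congr rfl fun i _ => ?_
      rw [hD i l₁]
      exact hterm i l₁ l₂
    have h2 : (∑ l₁ : Fin K, ∑ l₂ : Fin K, ∑ i : Fin N,
        -(Real.log (1 + A i l₁ / B i l₁))) = -((K : ℝ) * T) := by
      rw [hT]
      simp only [Finset.sum_neg_distrib, Finset.sum_const, card_univ, Fintype.card_fin,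
        smul_neg, nsmul_eq_mul, Finset.sum_neg_distrib, ← Finset.mul_sum]
    have hS' : S1 - S2 = -((K : ℝ) * T) := by rw [hS, h2]
    have hKne : (K : ℝ) ≠ 0 := hKR.ne'
    have hNne : (N : ℝ) ≠ 0 := hNR.ne'
    rw [show -(1 / ((K : ℝ) ^ 2 * N)) * S1 - -(1 / ((K : ℝ) ^ 2 * N)) * S2
        = -(1 / ((K : ℝ) ^ 2 * N)) * (S1 - S2) from by ring, hS']
    field_simp
  refine ⟨key, ?_⟩
  have hnn : 0 ≤ LDCL - LNSCL := by
    rw [key]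
    apply mul_nonneg (by positivity)
    refine Finset.sum_nonneg fun l₁ _ => Finset.sum_nonneg fun i _ => ?_
    apply Real.log_nonneg
    have : 0 ≤ A i l₁ / B i l₁ := div_nonneg (hAnn i l₁) (hBpos i l₁).le
    linarith
  linarith
end

section
/- Let C ≥ 2, let z₁, …, z_N ∈ ℝ^d (N = Cn, d ≥ C − 1) with ‖z_i‖ ≤ 1, labels y with n samples per class, and class means μ_c = (1/n) ∑_{i:y_i=c} z_i. Define Q(Z) = −(1/N) ∑_i ‖z_i‖² + (1/N) ∑_i log(∑_{j:y_j≠y_i} exp(⟨z_i, z_j⟩)). Then Q(Z) ≥ log(n(C−1)) − 1 − 1/(C−1). -/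
open Finset in
lemma my_log_sum_exp_ge {ι : Type*} (t : Finset ι) (ht : t.Nonempty) (a : ι → ℝ) :
    Real.log t.card + (∑ j ∈ t, a j) / t.card ≤ Real.log (∑ j ∈ t, Real.exp (a j)) := by
  have hc : (0:ℝ) < t.card := by exact_mod_cast ht.card_pos
  have hJ := convexOn_exp.map_sum_le (t := t) (w := fun _ => ((t.card:ℝ))⁻¹) (p := a)
    (fun i _ => by positivity)
    (by rw [Finset.sum_const, nsmul_eq_mul, mul_inv_cancel₀ hc.ne'])
    (fun i _ => Set.mem_univ _)
  simp only [smul_eq_mul] at hJ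
  rw [← Finset.mul_sum, ← Finset.mul_sum, inv_mul_eq_div, inv_mul_eq_div] at hJ
  have h3 : Real.exp ((∑ j ∈ t, a j) / t.card) * t.card ≤ ∑ j ∈ t, Real.exp (a j) :=
    (le_div_iff₀ hc).mp hJ
  calc Real.log t.card + (∑ j ∈ t, a j) / t.card
      = Real.log (Real.exp ((∑ j ∈ t, a j) / t.card) * t.card) := by
        rw [Real.log_mul (Real.exp_ne_zero _) hc.ne', Real.log_exp]; ring
    _ ≤ Real.log (∑ j ∈ t, Real.exp (a j)) := Real.log_le_log (by positivity) h3

open Finset in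
theorem nscl_unconstrained_lower_bound (d N C n : ℕ) (hC : 2 ≤ C) (hn : 0 < n)
    (hN : N = C * n) (hd : C - 1 ≤ d)
    (z : Fin N → EuclideanSpace ℝ (Fin d)) (hz : ∀ i, ‖z i‖ ≤ 1)
    (y : Fin N → Fin C)
    (hbal : ∀ c : Fin C, (univ.filter (fun i => y i = c)).card = n) :
    -(1 / (N : ℝ)) * ∑ i, ‖z i‖ ^ 2 +
      (1 / (N : ℝ)) * ∑ i : Fin N,
        Real.log (∑ j ∈ univ.filter (fun j => y j ≠ y i), Real.exp (inner ℝ (z i) (z j) : ℝ))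
      ≥ Real.log (n * ((C : ℝ) - 1)) - 1 - 1 / ((C : ℝ) - 1) := by
  have hCpos : 0 < C := lt_of_lt_of_le two_pos hC
  have hNpos : 0 < N := by rw [hN]; positivity
  have hNR : (0:ℝ) < N := by exact_mod_cast hNpos
  have hnR : (0:ℝ) < n := by exact_mod_cast hn
  have hC1R : (0:ℝ) < (C:ℝ) - 1 := by
    have : (2:ℝ) ≤ C := by exact_mod_cast hC
    linarith
  set S : EuclideanSpace ℝ (Fin d) := ∑ i, z i with hS
  set s : Fin C → EuclideanSpace ℝ (Fin d) :=
    fun c => ∑ i ∈ univ.filter (fun i => y i = c), z i with hsdef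
  -- cardinality of each negative set
  have hcard : ∀ i : Fin N, (univ.filter (fun j => y j ≠ y i)).card = (C - 1) * n := by
    intro i
    have h1 : (univ.filter (fun j => y j ≠ y i)) = (univ.filter (fun j => y j = y i))ᶜ := by
      ext j; simp
    rw [h1, Finset.card_compl, hbal, Fintype.card_fin, hN, Nat.sub_mul, one_mul]
  have hmR : (((C - 1) * n : ℕ) : ℝ) = ((C:ℝ) - 1) * n := by
    rw [Nat.cast_mul, Nat.cast_sub hCpos, Nat.cast_one]
  have hmRpos : (0:ℝ) < (((C - 1) * n : ℕ) : ℝ) := by rw [hmR]; positivity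
  set m : ℕ := (C - 1) * n with hm
  have hne : ∀ i : Fin N, (univ.filter (fun j => y j ≠ y i)).Nonempty := by
    intro i
    rw [← Finset.card_pos, hcard]
    exact Nat.mul_pos (by omega) hn
  -- key identity
  have hsum_inner_S : ∀ i : Fin N, ∑ j, (inner ℝ (z i) (z j) : ℝ) = inner ℝ (z i) S := by
    intro i; rw [hS, inner_sum]
  have hkey_i : ∀ i : Fin N,
      ∑ j ∈ univ.filter (fun j => y j ≠ y i), (inner ℝ (z i) (z j) : ℝ)
        = inner ℝ (z i) S - inner ℝ (z i) (s (y i)) := by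
    intro i
    have hsplit := Finset.sum_filter_add_sum_filter_not (univ : Finset (Fin N))
      (fun j => y j = y i) (fun j => (inner ℝ (z i) (z j) : ℝ))
    have h2 : ∑ j ∈ univ.filter (fun j => y j = y i), (inner ℝ (z i) (z j) : ℝ)
        = inner ℝ (z i) (s (y i)) := by rw [hsdef, inner_sum]
    have h3 : (univ.filter fun j => ¬ y j = y i) = (univ.filter fun j => y j ≠ y i) := rfl
    rw [h2, h3] at hsplit
    have h4 := hsum_inner_S i
    linarith
  have hkey : ∑ i : Fin N, ∑ j ∈ univ.filter (fun j => y j ≠ y i), (inner ℝ (z i) (z j) : ℝ)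
      = ‖S‖ ^ 2 - ∑ c : Fin C, ‖s c‖ ^ 2 := by
    have e1 : ∑ i : Fin N, (inner ℝ (z i) S : ℝ) = ‖S‖ ^ 2 := by
      rw [← sum_inner, ← hS, real_inner_self_eq_norm_sq]
    have e2 : ∑ i : Fin N, (inner ℝ (z i) (s (y i)) : ℝ) = ∑ c : Fin C, ‖s c‖ ^ 2 := by
      rw [← Finset.sum_fiberwise univ y (fun i => (inner ℝ (z i) (s (y i)) : ℝ))]
      refine Finset.sum_congr rfl fun c _ => ?_
      have : ∑ i ∈ univ.filter (fun i => y i = c), (inner ℝ (z i) (s (y i)) : ℝ)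
          = ∑ i ∈ univ.filter (fun i => y i = c), (inner ℝ (z i) (s c) : ℝ) :=
        Finset.sum_congr rfl fun i hi => by rw [(Finset.mem_filter.mp hi).2]
      rw [this, ← sum_inner]
      exact real_inner_self_eq_norm_sq (s c)
    calc ∑ i : Fin N, ∑ j ∈ univ.filter (fun j => y j ≠ y i), (inner ℝ (z i) (z j) : ℝ)
        = ∑ i : Fin N, ((inner ℝ (z i) S : ℝ) - inner ℝ (z i) (s (y i))) :=
          Finset.sum_congr rfl fun i _ => hkey_i i
      _ = ‖S‖ ^ 2 - ∑ c : Fin C, ‖s c‖ ^ 2 := by rw [Finset.sum_sub_distrib, e1, e2]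
  -- bound on class sums
  have hsc : ∀ c : Fin C, ‖s c‖ ≤ n := by
    intro c
    calc ‖s c‖ ≤ ∑ i ∈ univ.filter (fun i => y i = c), ‖z i‖ := norm_sum_le _ _
      _ ≤ ∑ i ∈ univ.filter (fun i => y i = c), 1 := Finset.sum_le_sum fun i _ => hz i
      _ = n := by rw [Finset.sum_const, hbal]; simp
  have hsc2 : ∑ c : Fin C, ‖s c‖ ^ 2 ≤ (C : ℝ) * n ^ 2 := by
    calc ∑ c : Fin C, ‖s c‖ ^ 2 ≤ ∑ c : Fin C, (n:ℝ) ^ 2 :=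
          Finset.sum_le_sum fun c _ =>
            pow_le_pow_left₀ (norm_nonneg _) (hsc c) 2
      _ = (C:ℝ) * n ^ 2 := by rw [Finset.sum_const]; simp [mul_comm]
  have hB : (-(C:ℝ) * n ^ 2) ≤
      ∑ i : Fin N, ∑ j ∈ univ.filter (fun j => y j ≠ y i), (inner ℝ (z i) (z j) : ℝ) := by
    rw [hkey]
    nlinarith [sq_nonneg ‖S‖]
  -- sum of squared norms
  have hA : ∑ i : Fin N, ‖z i‖ ^ 2 ≤ (N:ℝ) := by
    calc ∑ i : Fin N, ‖z i‖ ^ 2 ≤ ∑ i : Fin N, (1:ℝ) :=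
          Finset.sum_le_sum fun i _ => by
            have := hz i
            nlinarith [norm_nonneg (z i)]
      _ = (N:ℝ) := by simp
  -- Jensen per sample
  have hL : (N:ℝ) * Real.log (m:ℝ)
        + (∑ i : Fin N, ∑ j ∈ univ.filter (fun j => y j ≠ y i), (inner ℝ (z i) (z j) : ℝ)) / m
      ≤ ∑ i : Fin N,
          Real.log (∑ j ∈ univ.filter (fun j => y j ≠ y i), Real.exp (inner ℝ (z i) (z j) : ℝ)) := by
    have : ∀ i : Fin N,
        Real.log (m:ℝ) + (∑ j ∈ univ.filter (fun j => y j ≠ y i), (inner ℝ (z i) (z j) : ℝ)) / m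
          ≤ Real.log (∑ j ∈ univ.filter (fun j => y j ≠ y i), Real.exp (inner ℝ (z i) (z j) : ℝ)) := by
      intro i
      have := my_log_sum_exp_ge (univ.filter (fun j => y j ≠ y i)) (hne i)
        (fun j => (inner ℝ (z i) (z j) : ℝ))
      rwa [hcard i] at this
    calc (N:ℝ) * Real.log (m:ℝ)
          + (∑ i : Fin N, ∑ j ∈ univ.filter (fun j => y j ≠ y i), (inner ℝ (z i) (z j) : ℝ)) / m
        = ∑ i : Fin N, (Real.log (m:ℝ)
            + (∑ j ∈ univ.filter (fun j => y j ≠ y i), (inner ℝ (z i) (z j) : ℝ)) / m) := by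
          rw [Finset.sum_add_distrib, Finset.sum_const, ← Finset.sum_div]
          simp [nsmul_eq_mul]
      _ ≤ _ := Finset.sum_le_sum fun i _ => this i
  -- combine
  have hlog : Real.log (m:ℝ) = Real.log ((n:ℝ) * ((C:ℝ) - 1)) := by rw [hmR]; ring_nf
  have hNR' : (N:ℝ) = (C:ℝ) * n := by exact_mod_cast hN
  set A := ∑ i : Fin N, ‖z i‖ ^ 2 with hAdef
  set LSum := ∑ i : Fin N,
      Real.log (∑ j ∈ univ.filter (fun j => y j ≠ y i), Real.exp (inner ℝ (z i) (z j) : ℝ)) with hLdef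
  set B := ∑ i : Fin N, ∑ j ∈ univ.filter (fun j => y j ≠ y i), (inner ℝ (z i) (z j) : ℝ) with hBdef
  have t1 : (1 / (N : ℝ)) * A ≤ 1 := by
    have h := mul_le_mul_of_nonneg_left hA (le_of_lt (by positivity : (0:ℝ) < 1 / (N:ℝ)))
    rw [one_div]
    rwa [one_div, inv_mul_cancel₀ hNR.ne'] at h
  have t2 : (1 / (N:ℝ)) * ((N:ℝ) * Real.log (m:ℝ) + (-(C:ℝ) * n ^ 2) / m)
      ≤ (1 / (N:ℝ)) * LSum := by
    have hdiv : (-(C:ℝ) * n ^ 2) / (m:ℝ) ≤ B / (m:ℝ) := by gcongr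
    have h2 : (N:ℝ) * Real.log (m:ℝ) + (-(C:ℝ) * n ^ 2) / m ≤ LSum := by linarith
    exact mul_le_mul_of_nonneg_left h2 (by positivity)
  have eqn : (1 / (N:ℝ)) * ((N:ℝ) * Real.log (m:ℝ) + (-(C:ℝ) * n ^ 2) / m)
      = Real.log ((n:ℝ) * ((C:ℝ) - 1)) - 1 / ((C:ℝ) - 1) := by
    rw [hlog, hmR, hNR']
    field_simp
    ring
  rw [ge_iff_le]
  have t2' := t2
  rw [eqn] at t2'
  nlinarith [t2', t1]
end

section
/- Under the setting of the previous lower bound, Q(Z) = log(n(C−1)) − 1 − 1/(C−1) holds if Z satisfies: ‖z_i‖ = 1 for all i, z_i = μ_{y_i} for all i (within-class collapse), and the class means μ₁, …, μ_C form a simplex ETF (∑_c μ_c = 0, ‖μ_c‖ = 1, and ⟨μ_c, μ_{c'}⟩ = −1/(C−1) for c ≠ c'). In particular, any simplex-ETF collapsed configuration is a global minimizer of Q. -/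
open Finset

lemma log_sum_exp_ge {ι : Type*} (s : Finset ι) (a : ι → ℝ) (hs : s.Nonempty) :
    Real.log (s.card) + (∑ j ∈ s, a j) / s.card ≤ Real.log (∑ j ∈ s, Real.exp (a j)) := by
  have hM : (0:ℝ) < s.card := by exact_mod_cast Finset.card_pos.mpr hs
  set m : ℝ := (∑ j ∈ s, a j) / s.card with hm
  have key : (s.card : ℝ) * Real.exp m ≤ ∑ j ∈ s, Real.exp (a j) := by
    have h1 : ∀ j ∈ s, Real.exp m * (1 + (a j - m)) ≤ Real.exp (a j) := by
      intro j _
      have h := Real.add_one_le_exp (a j - m)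
      have hp := Real.exp_pos m
      calc Real.exp m * (1 + (a j - m)) ≤ Real.exp m * Real.exp (a j - m) := by nlinarith
        _ = Real.exp (a j) := by rw [← Real.exp_add]; ring_nf
    calc (s.card : ℝ) * Real.exp m
        = ∑ j ∈ s, Real.exp m * (1 + (a j - m)) := by
          have hsum : ∑ j ∈ s, a j = (s.card : ℝ) * m := by
            rw [hm]; field_simp
          have : ∑ j ∈ s, Real.exp m * (1 + (a j - m))
              = (s.card : ℝ) * Real.exp m + Real.exp m * ((∑ j ∈ s, a j) - (s.card : ℝ) * m) := by
            rw [← Finset.mul_sum, Finset.sum_add_distrib, Finset.sum_sub_distrib]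
            simp only [Finset.sum_const, nsmul_eq_mul, mul_one]
            ring
          rw [this, hsum]; ring
      _ ≤ ∑ j ∈ s, Real.exp (a j) := Finset.sum_le_sum h1
  calc Real.log (s.card) + m = Real.log ((s.card : ℝ) * Real.exp m) := by
        rw [Real.log_mul (ne_of_gt hM) (ne_of_gt (Real.exp_pos m)), Real.log_exp]
    _ ≤ _ := Real.log_le_log (by positivity) key

open Finset in
theorem nscl_etf_global_min (d N C n : ℕ) (hC : 2 ≤ C) (hn : 0 < n)
    (hN : N = C * n) (hd : C - 1 ≤ d)
    (z : Fin N → EuclideanSpace ℝ (Fin d))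
    (y : Fin N → Fin C)
    (hbal : ∀ c : Fin C, (univ.filter (fun i => y i = c)).card = n)
    (μ : Fin C → EuclideanSpace ℝ (Fin d))
    (hcollapse : ∀ i, z i = μ (y i))
    (hnorm : ∀ c, ‖μ c‖ = 1)
    (hsum : ∑ c, μ c = 0)
    (hangle : ∀ c c' : Fin C, c ≠ c' → (inner ℝ (μ c) (μ c') : ℝ) = -1 / ((C : ℝ) - 1)) :
    (-(1 / (N : ℝ)) * ∑ i, ‖z i‖ ^ 2 +
      (1 / (N : ℝ)) * ∑ i : Fin N,
        Real.log (∑ j ∈ univ.filter (fun j => y j ≠ y i), Real.exp (inner ℝ (z i) (z j) : ℝ))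
      = Real.log (n * ((C : ℝ) - 1)) - 1 - 1 / ((C : ℝ) - 1)) ∧
    (∀ w : Fin N → EuclideanSpace ℝ (Fin d), (∀ i, ‖w i‖ ≤ 1) →
      -(1 / (N : ℝ)) * ∑ i, ‖z i‖ ^ 2 +
        (1 / (N : ℝ)) * ∑ i : Fin N,
          Real.log (∑ j ∈ univ.filter (fun j => y j ≠ y i), Real.exp (inner ℝ (z i) (z j) : ℝ))
      ≤ -(1 / (N : ℝ)) * ∑ i, ‖w i‖ ^ 2 +
        (1 / (N : ℝ)) * ∑ i : Fin N,
          Real.log (∑ j ∈ univ.filter (fun j => y j ≠ y i), Real.exp (inner ℝ (w i) (w j) : ℝ))) := by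
  have hC1 : (1:ℝ) < (C:ℝ) := by exact_mod_cast lt_of_lt_of_le one_lt_two (by exact_mod_cast hC)
  have hCR : (0:ℝ) < (C:ℝ) - 1 := by linarith
  have hnR : (0:ℝ) < (n:ℝ) := by exact_mod_cast hn
  have hNpos : 0 < N := by rw [hN]; exact Nat.mul_pos (by omega) hn
  have hNR : (0:ℝ) < (N:ℝ) := by exact_mod_cast hNpos
  have hnN : n ≤ N := by rw [hN]; exact Nat.le_mul_of_pos_left n (by omega)
  have hMpos : 0 < N - n := by
    rw [hN]
    have : 2 * n ≤ C * n := Nat.mul_le_mul_right n hC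
    omega
  -- cardinality of the "different class" set
  have hcard : ∀ i : Fin N, (univ.filter (fun j => y j ≠ y i)).card = N - n := by
    intro i
    have h := Finset.card_filter_add_card_filter_not
      (s := (univ : Finset (Fin N))) (p := fun j => y j = y i)
    have hcu : (univ : Finset (Fin N)).card = N := by simp
    have hb := hbal (y i)
    have he : (univ.filter (fun j => y j ≠ y i)) = (univ.filter (fun j => ¬ (y j = y i))) := by
      simp [ne_eq]
    rw [he]
    omega
  have hMR : ((N - n : ℕ) : ℝ) = (n:ℝ) * ((C:ℝ) - 1) := by
    rw [Nat.cast_sub hnN, hN]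
    push_cast
    ring
  have hMRpos : (0:ℝ) < (n:ℝ) * ((C:ℝ) - 1) := by positivity
  -- value of the objective at z
  have hz2 : ∑ i : Fin N, ‖z i‖ ^ 2 = (N:ℝ) := by
    have : ∀ i : Fin N, ‖z i‖ ^ 2 = 1 := by
      intro i; rw [hcollapse i, hnorm]; norm_num
    rw [Finset.sum_congr rfl (fun i _ => this i)]
    simp
  have hlog : ∀ i : Fin N,
      Real.log (∑ j ∈ univ.filter (fun j => y j ≠ y i), Real.exp (inner ℝ (z i) (z j) : ℝ))
        = Real.log ((n:ℝ) * ((C:ℝ) - 1)) - 1 / ((C:ℝ) - 1) := by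
    intro i
    have hterm : ∀ j ∈ univ.filter (fun j => y j ≠ y i),
        Real.exp (inner ℝ (z i) (z j) : ℝ) = Real.exp (-1 / ((C:ℝ) - 1)) := by
      intro j hj
      rw [Finset.mem_filter] at hj
      rw [hcollapse i, hcollapse j, hangle (y i) (y j) (Ne.symm hj.2)]
    rw [Finset.sum_congr rfl hterm, Finset.sum_const, hcard i, nsmul_eq_mul, hMR,
      Real.log_mul (ne_of_gt hMRpos) (ne_of_gt (Real.exp_pos _)), Real.log_exp]
    ring
  have hval : -(1 / (N : ℝ)) * ∑ i, ‖z i‖ ^ 2 +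
      (1 / (N : ℝ)) * ∑ i : Fin N,
        Real.log (∑ j ∈ univ.filter (fun j => y j ≠ y i), Real.exp (inner ℝ (z i) (z j) : ℝ))
      = Real.log ((n:ℝ) * ((C : ℝ) - 1)) - 1 - 1 / ((C : ℝ) - 1) := by
    rw [hz2, Finset.sum_congr rfl (fun i _ => hlog i), Finset.sum_const]
    simp only [card_univ, Fintype.card_fin, nsmul_eq_mul]
    field_simp
    ring
  refine ⟨hval, ?_⟩
  intro w hw
  rw [hval]
  -- lower bound for arbitrary w
  set T : EuclideanSpace ℝ (Fin d) := ∑ j, w j with hT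
  set B : Fin C → EuclideanSpace ℝ (Fin d) := fun c => ∑ j ∈ univ.filter (fun j => y j = c), w j with hB
  have hA : ∑ i : Fin N, ‖w i‖ ^ 2 ≤ (N:ℝ) := by
    calc ∑ i : Fin N, ‖w i‖ ^ 2 ≤ ∑ _i : Fin N, (1:ℝ) := by
          apply Finset.sum_le_sum
          intro i _
          have := pow_le_pow_left₀ (norm_nonneg (w i)) (hw i) 2
          simpa using this
      _ = (N:ℝ) := by simp
  have hcross : ∀ i : Fin N, ∑ j ∈ univ.filter (fun j => y j ≠ y i), (inner ℝ (w i) (w j) : ℝ)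
      = (inner ℝ (w i) T : ℝ) - (inner ℝ (w i) (B (y i)) : ℝ) := by
    intro i
    have hsplit := Finset.sum_filter_add_sum_filter_not (univ : Finset (Fin N))
      (fun j => y j = y i) (fun j => (inner ℝ (w i) (w j) : ℝ))
    have h1 : ∑ j : Fin N, (inner ℝ (w i) (w j) : ℝ) = (inner ℝ (w i) T : ℝ) := by
      rw [hT, inner_sum]
    have h2 : ∑ j ∈ univ.filter (fun j => y j = y i), (inner ℝ (w i) (w j) : ℝ)
        = (inner ℝ (w i) (B (y i)) : ℝ) := by
      rw [hB, inner_sum]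
    have he : (univ.filter (fun j => y j ≠ y i)) = (univ.filter (fun j => ¬ (y j = y i))) := by
      simp [ne_eq]
    rw [he]
    linarith [hsplit, h1, h2]
  have hTB : ∑ i : Fin N, ((inner ℝ (w i) T : ℝ) - (inner ℝ (w i) (B (y i)) : ℝ))
      = ‖T‖ ^ 2 - ∑ c : Fin C, ‖B c‖ ^ 2 := by
    rw [Finset.sum_sub_distrib]
    congr 1
    · rw [← sum_inner, ← hT, real_inner_self_eq_norm_sq]
    · rw [← Finset.sum_fiberwise (univ : Finset (Fin N)) y
        (fun i => (inner ℝ (w i) (B (y i)) : ℝ))]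
      apply Finset.sum_congr rfl
      intro c _
      have : ∀ i ∈ univ.filter (fun i => y i = c),
          (inner ℝ (w i) (B (y i)) : ℝ) = (inner ℝ (w i) (B c) : ℝ) := by
        intro i hi
        rw [Finset.mem_filter] at hi
        rw [hi.2]
      rw [Finset.sum_congr rfl this, ← sum_inner]
      exact real_inner_self_eq_norm_sq (B c)
  have hBc : ∀ c : Fin C, ‖B c‖ ^ 2 ≤ (n:ℝ) ^ 2 := by
    intro c
    have h1 : ‖B c‖ ≤ (n:ℝ) := by
      calc ‖B c‖ ≤ ∑ j ∈ univ.filter (fun j => y j = c), ‖w j‖ := norm_sum_le _ _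
        _ ≤ ∑ _j ∈ univ.filter (fun j => y j = c), (1:ℝ) :=
            Finset.sum_le_sum (fun j _ => hw j)
        _ = (n:ℝ) := by rw [Finset.sum_const, hbal c]; simp
    have := pow_le_pow_left₀ (norm_nonneg (B c)) h1 2
    simpa using this
  have hcross_total : -((C:ℝ) * (n:ℝ) ^ 2)
      ≤ ∑ i : Fin N, ∑ j ∈ univ.filter (fun j => y j ≠ y i), (inner ℝ (w i) (w j) : ℝ) := by
    rw [Finset.sum_congr rfl (fun i _ => hcross i), hTB]
    have h1 : ∑ c : Fin C, ‖B c‖ ^ 2 ≤ (C:ℝ) * (n:ℝ) ^ 2 := by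
      calc ∑ c : Fin C, ‖B c‖ ^ 2 ≤ ∑ _c : Fin C, (n:ℝ) ^ 2 :=
            Finset.sum_le_sum (fun c _ => hBc c)
        _ = (C:ℝ) * (n:ℝ) ^ 2 := by simp [mul_comm]
    have h2 : (0:ℝ) ≤ ‖T‖ ^ 2 := by positivity
    linarith
  -- per-sample Jensen bound
  have hjensen : ∀ i : Fin N,
      Real.log ((n:ℝ) * ((C:ℝ) - 1))
        + (∑ j ∈ univ.filter (fun j => y j ≠ y i), (inner ℝ (w i) (w j) : ℝ)) / ((n:ℝ) * ((C:ℝ) - 1))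
      ≤ Real.log (∑ j ∈ univ.filter (fun j => y j ≠ y i), Real.exp (inner ℝ (w i) (w j) : ℝ)) := by
    intro i
    have hne : (univ.filter (fun j => y j ≠ y i)).Nonempty := by
      rw [← Finset.card_pos, hcard i]; omega
    have h := log_sum_exp_ge (univ.filter (fun j => y j ≠ y i))
      (fun j => (inner ℝ (w i) (w j) : ℝ)) hne
    rwa [hcard i, hMR] at h
  have hlogsum : (N:ℝ) * Real.log ((n:ℝ) * ((C:ℝ) - 1))
      + (∑ i : Fin N, ∑ j ∈ univ.filter (fun j => y j ≠ y i), (inner ℝ (w i) (w j) : ℝ))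
          / ((n:ℝ) * ((C:ℝ) - 1))
      ≤ ∑ i : Fin N,
          Real.log (∑ j ∈ univ.filter (fun j => y j ≠ y i), Real.exp (inner ℝ (w i) (w j) : ℝ)) := by
    have := Finset.sum_le_sum (fun i (_ : i ∈ (univ : Finset (Fin N))) => hjensen i)
    calc (N:ℝ) * Real.log ((n:ℝ) * ((C:ℝ) - 1))
        + (∑ i : Fin N, ∑ j ∈ univ.filter (fun j => y j ≠ y i), (inner ℝ (w i) (w j) : ℝ))
            / ((n:ℝ) * ((C:ℝ) - 1))
        = ∑ i : Fin N, (Real.log ((n:ℝ) * ((C:ℝ) - 1))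
            + (∑ j ∈ univ.filter (fun j => y j ≠ y i), (inner ℝ (w i) (w j) : ℝ))
                / ((n:ℝ) * ((C:ℝ) - 1))) := by
          rw [Finset.sum_add_distrib, Finset.sum_const]
          simp only [card_univ, Fintype.card_fin, nsmul_eq_mul]
          rw [← Finset.sum_div]
      _ ≤ _ := this
  -- combine
  set W : ℝ := ∑ i : Fin N, ‖w i‖ ^ 2 with hW
  set S : ℝ := ∑ i : Fin N,
      Real.log (∑ j ∈ univ.filter (fun j => y j ≠ y i), Real.exp (inner ℝ (w i) (w j) : ℝ)) with hS
  set X : ℝ := ∑ i : Fin N, ∑ j ∈ univ.filter (fun j => y j ≠ y i), (inner ℝ (w i) (w j) : ℝ)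
    with hX
  set M : ℝ := (n:ℝ) * ((C:ℝ) - 1) with hM
  set L : ℝ := Real.log M with hL
  have hNR2 : (N:ℝ) = (C:ℝ) * (n:ℝ) := by rw [hN]; push_cast; ring
  have hXM : -(1/((C:ℝ)-1)) ≤ (X / M) / (N:ℝ) := by
    have h1 : -((C:ℝ) * (n:ℝ) ^ 2) / M ≤ X / M := by gcongr
    have h2 : (-((C:ℝ) * (n:ℝ) ^ 2) / M) / (N:ℝ) ≤ (X / M) / (N:ℝ) := by gcongr
    have h3 : (-((C:ℝ) * (n:ℝ) ^ 2) / M) / (N:ℝ) = -(1/((C:ℝ)-1)) := by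
      rw [hM, hNR2]; field_simp
    linarith
  have f1 : L + (X / M) / (N:ℝ) ≤ (1/(N:ℝ)) * S := by
    have h0 : (0:ℝ) ≤ 1/(N:ℝ) := by positivity
    have h1 := mul_le_mul_of_nonneg_left hlogsum h0
    have heq : (1/(N:ℝ)) * ((N:ℝ) * L + X / M) = L + (X / M) / (N:ℝ) := by
      field_simp
    linarith [h1, heq.ge, heq.le]
  have f2 : (-1 : ℝ) ≤ -(1/(N:ℝ)) * W := by
    have h0 : (0:ℝ) ≤ 1/(N:ℝ) := by positivity
    have h1 := mul_le_mul_of_nonneg_left hA h0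
    have h2 : (1/(N:ℝ)) * (N:ℝ) = 1 := by field_simp
    nlinarith
  linarith [f1, f2, hXM]
end
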